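/- arXiv:1910.07653 — 3 statements merged into one kernel-verified Lean document; each statement's English description precedes it below -/
import Mathlib

section
/- Let J and J' be two disjoint intervals in [0,1] with centers c and c' and lengths r and r'. Then the interaction energy of the normalized uniform measures satisfies I(μ_J, μ_{J'}) < (−log|c−c'|) + 2. -/
open MeasureTheory Set

private lemma claimC (p q : ℝ) (hp : 0 ≤ p) (hpq : p < q) :
    (q - p) * Real.log ((p + q) / 2) < q * Real.log q - p * Real.log p := by
  have hq : 0 < q := lt_of_le_of_lt hp hpq
  have hm : 0 < (p + q) / 2 := by linarith
  have h1 : 0 < q * Real.log (q / ((p + q) / 2)) := by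
    apply mul_pos hq
    apply Real.log_pos
    rw [lt_div_iff₀ hm]; linarith
  have h2 : p * Real.log (p / ((p + q) / 2)) ≤ 0 := by
    apply mul_nonpos_iff.mpr
    exact Or.inl ⟨hp, Real.log_nonpos (div_nonneg hp hm.le) ((div_le_one hm).2 (by linarith))⟩
  have hq' : q * Real.log q = q * Real.log ((p + q) / 2) + q * Real.log (q / ((p + q) / 2)) := by
    rw [Real.log_div hq.ne' hm.ne']; ring
  have hp' : p * Real.log p = p * Real.log ((p + q) / 2) + p * Real.log (p / ((p + q) / 2)) := by
    rcases eq_or_lt_of_le hp with h | h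
    · simp [← h]
    · rw [Real.log_div h.ne' hm.ne']; ring
  linarith

private lemma L_right (a b d : ℝ) (hab : a < b) (hbd : b < d) :
    ∫ x in a..b, -Real.log |x - d| < (b - a) * (-Real.log |(a + b) / 2 - d| + 1) := by
  have huIcc : Set.uIcc a b = Set.Icc a b := Set.uIcc_of_le hab.le
  have habs : Set.EqOn (fun x => -Real.log |x - d|) (fun x => -Real.log (d - x))
      (Set.uIcc a b) := by
    intro x hx
    rw [huIcc] at hx
    have : |x - d| = d - x := by
      rw [abs_sub_comm]; exact abs_of_pos (by linarith [hx.2])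
    simp [this]
  rw [intervalIntegral.integral_congr habs]
  have hderiv : ∀ x ∈ Set.uIcc a b,
      HasDerivAt (fun x => (d - x) * Real.log (d - x) - (d - x)) (-Real.log (d - x)) x := by
    intro x hx
    rw [huIcc] at hx
    have hne : d - x ≠ 0 := by linarith [hx.2]
    have h1 : HasDerivAt (fun x : ℝ => d - x) (-1) x := by
      simpa using (hasDerivAt_id' x).const_sub d
    have h2 : HasDerivAt (fun x => Real.log (d - x)) (-1 / (d - x)) x := h1.log hne
    have h3 : HasDerivAt (fun x => (d - x) * Real.log (d - x) - (d - x))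
        (-1 * Real.log (d - x) + (d - x) * (-1 / (d - x)) - -1) x := (h1.mul h2).sub h1
    convert h3 using 1
    rw [mul_div_assoc', mul_neg_one, neg_div, div_self hne]; ring
  have hint : IntervalIntegrable (fun x => -Real.log (d - x)) volume a b := by
    apply ContinuousOn.intervalIntegrable
    apply ContinuousOn.neg
    apply ContinuousOn.log
    · exact continuousOn_const.sub continuousOn_id
    · intro x hx
      rw [huIcc] at hx
      intro h; linarith [hx.2]
  rw [intervalIntegral.integral_eq_sub_of_hasDerivAt hderiv hint]
  have hC := claimC (d - b) (d - a) (by linarith) (by linarith)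
  have hmid : |(a + b) / 2 - d| = ((d - b) + (d - a)) / 2 := by
    rw [abs_sub_comm]
    rw [abs_of_pos (by linarith)]
    ring
  rw [hmid]
  nlinarith [hC]

private lemma L_both (a b d : ℝ) (hab : a < b) (hd : d < a ∨ b < d) :
    ∫ x in a..b, -Real.log |x - d| < (b - a) * (-Real.log |(a + b) / 2 - d| + 1) := by
  rcases hd with hd | hd
  · have hcomp : (∫ x in a..b, -Real.log |x - d|)
        = ∫ x in (-b)..(-a), -Real.log |x - (-d)| := by
      rw [← intervalIntegral.integral_comp_neg (fun x => -Real.log |x - (-d)|)]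
      apply intervalIntegral.integral_congr
      intro x _
      show -Real.log |x - d| = -Real.log |(-x) - (-d)|
      have : (-x) - (-d) = -(x - d) := by ring
      rw [this, abs_neg]
    rw [hcomp]
    have := L_right (-b) (-a) (-d) (by linarith) (by linarith)
    have he1 : (-a - -b) = b - a := by ring
    have he2 : |(-b + -a) / 2 - -d| = |(a + b) / 2 - d| := by
      rw [← abs_neg]; ring_nf
    rw [he1, he2] at this
    exact this
  · exact L_right a b d hab hd

private lemma ioo_eq_interval (a b : ℝ) (hab : a ≤ b) (f : ℝ → ℝ) :
    ∫ x in Set.Ioo a b, f x = ∫ x in a..b, f x := by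
  rw [intervalIntegral.integral_of_le hab, MeasureTheory.integral_Ioc_eq_integral_Ioo]

/-- For two disjoint intervals `J = (c - r/2, c + r/2)` and
`J' = (c' - r'/2, c' + r'/2)` contained in `[0,1]`, the interaction energy of the
normalized uniform measures satisfies `I(μ_J, μ_{J'}) < -log |c - c'| + 2`. -/
theorem interaction_energy_upper_bound (c c' r r' : ℝ) (hr : 0 < r) (hr' : 0 < r')
    (hJ : Set.Ioo (c - r / 2) (c + r / 2) ⊆ Set.Icc (0 : ℝ) 1)
    (hJ' : Set.Ioo (c' - r' / 2) (c' + r' / 2) ⊆ Set.Icc (0 : ℝ) 1)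
    (hdisj : Disjoint (Set.Ioo (c - r / 2) (c + r / 2)) (Set.Ioo (c' - r' / 2) (c' + r' / 2))) :
    (1 / (r * r')) *
        ∫ x in Set.Ioo (c - r / 2) (c + r / 2),
          ∫ y in Set.Ioo (c' - r' / 2) (c' + r' / 2), -Real.log |x - y| <
      -Real.log |c - c'| + 2 := by
  set A := c - r / 2 with hA
  set B := c + r / 2 with hB
  set A' := c' - r' / 2 with hA'
  set B' := c' + r' / 2 with hB'
  clear_value A B A' B'
  have hAB : A < B := by simp only [hA, hB]; linarith
  have hA'B' : A' < B' := by simp only [hA', hB']; linarith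
  -- separation
  have hsep : B ≤ A' ∨ B' ≤ A := by
    rcases le_or_gt B A' with h | h
    · exact Or.inl h
    · right
      by_contra h2
      push_neg at h2
      have hpt : ∀ t : ℝ, t ∈ Set.Ioo A B → t ∈ Set.Ioo A' B' → False :=
        fun t ht ht' => Set.disjoint_left.mp hdisj ht ht'
      rcases le_total A A' with h3 | h3 <;> rcases le_total B B' with h4 | h4
      · exact hpt ((A' + B) / 2) ⟨by linarith, by linarith⟩ ⟨by linarith, by linarith⟩
      · exact hpt ((A' + B') / 2) ⟨by linarith, by linarith⟩ ⟨by linarith, by linarith⟩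
      · exact hpt ((A + B) / 2) ⟨by linarith, by linarith⟩ ⟨by linarith, by linarith⟩
      · exact hpt ((A + B') / 2) ⟨by linarith, by linarith⟩ ⟨by linarith, by linarith⟩
  have hout : c' < A ∨ B < c' := by
    rcases hsep with h | h
    · right; simp only [hA']  at h; simp only [hB]; linarith
    · left; simp only [hB'] at h; simp only [hA]; linarith
  -- inner bound
  have hInner_le : ∀ x ∈ Set.Ioo A B,
      (∫ y in Set.Ioo A' B', -Real.log |x - y|) ≤ r' * (-Real.log |x - c'| + 1) := by
    intro x hx
    have hxd : x < A' ∨ B' < x := by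
      rcases hsep with h | h
      · left; exact lt_of_lt_of_le hx.2 h
      · right; exact lt_of_le_of_lt h hx.1
    have habs : ∀ y : ℝ, |x - y| = |y - x| := fun y => abs_sub_comm x y
    have hL := L_both A' B' x hA'B' hxd
    have he1 : B' - A' = r' := by simp only [hA', hB']; ring
    have he2 : (A' + B') / 2 = c' := by simp only [hA', hB']; ring
    rw [he1, he2] at hL
    calc (∫ y in Set.Ioo A' B', -Real.log |x - y|)
        = ∫ y in A'..B', -Real.log |y - x| := by
          rw [ioo_eq_interval A' B' hA'B'.le]
          simp_rw [habs]
      _ ≤ r' * (-Real.log |c' - x| + 1) := hL.le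
      _ = r' * (-Real.log |x - c'| + 1) := by rw [abs_sub_comm]
  -- nonneg of inner
  have hInner_nonneg : ∀ x ∈ Set.Ioo A B,
      0 ≤ ∫ y in Set.Ioo A' B', -Real.log |x - y| := by
    intro x hx
    apply MeasureTheory.setIntegral_nonneg measurableSet_Ioo
    intro y hy
    have hx01 := hJ hx
    have hy01 := hJ' hy
    have : |x - y| ≤ 1 := by
      rw [abs_le]
      constructor <;> [linarith [hx01.1, hy01.2]; linarith [hx01.2, hy01.1]]
    simp only [neg_nonneg]
    exact Real.log_nonpos (abs_nonneg _) this
  -- integrability of bound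
  have hcont : ContinuousOn (fun x => r' * (-Real.log |x - c'| + 1)) (Set.Icc A B) := by
    apply continuousOn_const.mul
    apply ContinuousOn.add _ continuousOn_const
    apply ContinuousOn.neg
    apply ContinuousOn.log
    · exact (continuousOn_id.sub continuousOn_const).abs
    · intro x hx
      rcases hout with h | h
      · intro hc; rw [abs_eq_zero, sub_eq_zero] at hc; subst hc; linarith [hx.1]
      · intro hc; rw [abs_eq_zero, sub_eq_zero] at hc; subst hc; linarith [hx.2]
  have hB_int : IntegrableOn (fun x => r' * (-Real.log |x - c'| + 1)) (Set.Ioo A B) volume :=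
    (hcont.integrableOn_compact isCompact_Icc).mono_set Set.Ioo_subset_Icc_self
  have h1 : (∫ x in Set.Ioo A B, ∫ y in Set.Ioo A' B', -Real.log |x - y|)
      ≤ ∫ x in Set.Ioo A B, r' * (-Real.log |x - c'| + 1) :=
    MeasureTheory.integral_mono_of_nonneg
      (MeasureTheory.ae_restrict_of_forall_mem measurableSet_Ioo hInner_nonneg)
      hB_int
      (MeasureTheory.ae_restrict_of_forall_mem measurableSet_Ioo hInner_le)
  -- compute the bound integral
  have hlog_int : IntervalIntegrable (fun x => -Real.log |x - c'|) volume A B := by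
    apply ContinuousOn.intervalIntegrable
    rw [Set.uIcc_of_le hAB.le]
    apply ContinuousOn.neg
    apply ContinuousOn.log
    · exact (continuousOn_id.sub continuousOn_const).abs
    · intro x hx
      rcases hout with h | h
      · intro hc; rw [abs_eq_zero, sub_eq_zero] at hc; subst hc; linarith [hx.1]
      · intro hc; rw [abs_eq_zero, sub_eq_zero] at hc; subst hc; linarith [hx.2]
  have h2 : (∫ x in Set.Ioo A B, r' * (-Real.log |x - c'| + 1))
      = r' * ((∫ x in A..B, -Real.log |x - c'|) + r) := by
    rw [ioo_eq_interval A B hAB.le]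
    rw [intervalIntegral.integral_const_mul]
    rw [intervalIntegral.integral_add hlog_int intervalIntegrable_const]
    rw [intervalIntegral.integral_const]
    have : B - A = r := by simp only [hA, hB]; ring
    rw [this]
    simp
  have h3 : (∫ x in A..B, -Real.log |x - c'|) < r * (-Real.log |c - c'| + 1) := by
    have hL := L_both A B c' hAB hout
    have he1 : B - A = r := by simp only [hA, hB]; ring
    have he2 : (A + B) / 2 = c := by simp only [hA, hB]; ring
    rw [he1, he2] at hL
    exact hL
  -- combine
  have hrr' : 0 < r * r' := mul_pos hr hr'
  rw [div_mul_eq_mul_div, one_mul, div_lt_iff₀ hrr']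
  nlinarith [mul_lt_mul_of_pos_left h3 hr', h1, h2]
end

section
/- The double integral ∬_{[0,1]×[0,1]} (−log|x−y|) dx dy equals 3/2. -/
open MeasureTheory Set

lemma aux_intIntegrable_log {b : ℝ} (hb0 : 0 ≤ b) (hb1 : b ≤ 1) :
    IntervalIntegrable Real.log volume 0 b := by
  have hrpow : IntervalIntegrable (fun x : ℝ => 2 * x ^ (-(1/2) : ℝ)) volume 0 b :=
    (intervalIntegral.intervalIntegrable_rpow' (by norm_num)).const_mul 2
  refine IntervalIntegrable.mono_fun hrpow Real.measurable_log.aestronglyMeasurable ?_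
  filter_upwards [ae_restrict_mem measurableSet_uIoc] with x hx
  rw [Set.uIoc_of_le hb0] at hx
  have hx0 : 0 < x := hx.1
  have hx1 : x ≤ 1 := hx.2.trans hb1
  have hs : 0 < Real.sqrt x := Real.sqrt_pos.2 hx0
  have h1 : x ^ (-(1/2) : ℝ) = (Real.sqrt x)⁻¹ := by
    rw [Real.rpow_neg hx0.le, ← Real.sqrt_eq_rpow]
  have h2 : Real.log x = 2 * Real.log (Real.sqrt x) := by
    rw [Real.log_sqrt hx0.le]; ring
  have h3 : Real.log (Real.sqrt x)⁻¹ ≤ (Real.sqrt x)⁻¹ := by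
    have := Real.log_le_sub_one_of_pos (inv_pos.2 hs); linarith
  have h4 : -Real.log x ≤ 2 * (Real.sqrt x)⁻¹ := by
    rw [Real.log_inv] at h3; linarith
  have h5 : Real.log x ≤ 0 := Real.log_nonpos hx0.le hx1
  have h6 : (0:ℝ) < 2 * (Real.sqrt x)⁻¹ := by positivity
  simp only [Real.norm_eq_abs, h1]
  rw [abs_of_nonpos h5, abs_of_pos h6]
  exact h4

lemma aux_integral_neg_log {b : ℝ} (hb0 : 0 ≤ b) (hb1 : b ≤ 1) :
    ∫ y in (0:ℝ)..b, -Real.log y = b - b * Real.log b := by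
  have key : ∫ y in (0:ℝ)..b, Real.log y = b * Real.log b - b := by
    have := intervalIntegral.integral_eq_sub_of_hasDeriv_right_of_le hb0
      (f := fun x => x * Real.log x - x) (f' := Real.log)
      ((Real.continuous_mul_log.sub continuous_id).continuousOn)
      (fun x hx => by
        have h := (Real.hasDerivAt_mul_log (ne_of_gt hx.1)).sub (hasDerivAt_id x)
        exact (h.congr_deriv (by ring)).hasDerivWithinAt)
      (aux_intIntegrable_log hb0 hb1)
    simpa using this
  rw [intervalIntegral.integral_neg, key]; ring

lemma aux_xlogx : ∫ x in (0:ℝ)..1, x * Real.log x = -(1/4) := by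
  have := intervalIntegral.integral_eq_sub_of_hasDeriv_right_of_le (zero_le_one)
    (f := fun x => x * (x * Real.log x) / 2 - x ^ 2 / 4) (f' := fun x => x * Real.log x)
    (((continuous_id.mul Real.continuous_mul_log).div_const 2).sub
      ((continuous_pow 2).div_const 4)).continuousOn
    (fun x hx => by
      have h := (((hasDerivAt_id x).mul (Real.hasDerivAt_mul_log (ne_of_gt hx.1))).div_const 2).sub
        ((hasDerivAt_pow 2 x).div_const 4)
      simp only [id_eq, Nat.cast_ofNat, pow_one] at h
      convert h.hasDerivWithinAt using 1
      · rfl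
      norm_num
      ring)
    (Real.continuous_mul_log.intervalIntegrable 0 1)
  rw [this]; simp [Real.log_one]

lemma aux_inner {x : ℝ} (hx : x ∈ Set.Icc (0:ℝ) 1) :
    ∫ y in Set.Icc (0:ℝ) 1, -Real.log |x - y| =
      1 - x * Real.log x - (1 - x) * Real.log (1 - x) := by
  obtain ⟨hx0, hx1⟩ := hx
  rw [MeasureTheory.integral_Icc_eq_integral_Ioc, ← intervalIntegral.integral_of_le zero_le_one]
  simp_rw [Real.log_abs]
  rw [intervalIntegral.integral_comp_sub_left (fun u => -Real.log u) x, sub_zero]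
  have h2 : IntervalIntegrable (fun u => -Real.log u) volume 0 x :=
    (aux_intIntegrable_log hx0 hx1).neg
  have h1 : IntervalIntegrable (fun u => -Real.log u) volume (x - 1) 0 := by
    have h1' : IntervalIntegrable (fun u => -Real.log u) volume 0 (1 - x) :=
      (aux_intIntegrable_log (by linarith) (by linarith)).neg
    have := (IntervalIntegrable.iff_comp_neg (by simp)).mp h1'
    simp only [Real.log_neg_eq_log, neg_zero, neg_sub] at this
    exact this.symm
  rw [← intervalIntegral.integral_add_adjacent_intervals h1 h2]
  have e1 : ∫ u in (x - 1 : ℝ)..0, -Real.log u = (1 - x) - (1 - x) * Real.log (1 - x) := by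
    have hcn := intervalIntegral.integral_comp_neg (a := 0) (b := 1 - x)
      (fun u => -Real.log u)
    simp only [Real.log_neg_eq_log, neg_zero, neg_sub] at hcn
    rw [← hcn]
    exact aux_integral_neg_log (by linarith) (by linarith)
  have e2 : ∫ u in (0:ℝ)..x, -Real.log u = x - x * Real.log x :=
    aux_integral_neg_log hx0 hx1
  rw [e1, e2]; ring

/-- The Coulomb energy of Lebesgue measure on the unit interval:
`∬_{[0,1]×[0,1]} (-log |x - y|) dx dy = 3/2`. -/
theorem energy_lebesgue_unit_interval :
    (∫ x in Set.Icc (0 : ℝ) 1, ∫ y in Set.Icc (0 : ℝ) 1, -Real.log |x - y|) = 3 / 2 := by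
  rw [MeasureTheory.setIntegral_congr_fun measurableSet_Icc
    (fun x hx => aux_inner hx)]
  rw [MeasureTheory.integral_Icc_eq_integral_Ioc, ← intervalIntegral.integral_of_le zero_le_one]
  have c1 : Continuous fun x : ℝ => x * Real.log x := Real.continuous_mul_log
  have c2 : Continuous fun x : ℝ => (1 - x) * Real.log (1 - x) :=
    Real.continuous_mul_log.comp (continuous_const.sub continuous_id)
  rw [intervalIntegral.integral_sub (f := fun x => 1 - x * Real.log x)
      ((continuous_const.sub c1).intervalIntegrable 0 1) (c2.intervalIntegrable 0 1),
    intervalIntegral.integral_sub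
      (continuous_const.intervalIntegrable 0 1) (c1.intervalIntegrable 0 1)]
  have e2 : ∫ x in (0:ℝ)..1, (1 - x) * Real.log (1 - x) = -(1/4) := by
    have := intervalIntegral.integral_comp_sub_left (a := 0) (b := 1)
      (fun u => u * Real.log u) 1
    simp only [sub_zero, sub_self] at this
    rw [this, aux_xlogx]
  rw [aux_xlogx, e2]
  simp
  norm_num
end

section
/- Define n₁ = 2^10 and n_k = 2^{n_{k−1}+1}, r_n = 2^{−n}, and V_n = ⋃_{j=0}^{n−1} J_{j,n} with intervals of length r_n centered at (2j+1)/(2n). Let X_k = [0,1] \ ⋃_{i=1}^{k−1} V_{n_i}. Then Leb(V_{n_k} ∩ X_k) = Leb(X_k) · Leb(V_{n_k}). -/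
open MeasureTheory Set

/-- The tower sequence `n₁ = 2^10`, `n_{k+1} = 2^{n_k + 1}` (indexed from 0). -/
def towerSeq : ℕ → ℕ
  | 0 => 2 ^ 10
  | k + 1 => 2 ^ (towerSeq k + 1)

/-- `V_n`: the union of `n` equally spaced open intervals of length `2^{-n}` centered at
`(2j+1)/(2n)`. -/
noncomputable def towerV (n : ℕ) : Set ℝ :=
  ⋃ j ∈ Finset.range n,
    Set.Ioo ((2 * (j : ℝ) + 1) / (2 * (n : ℝ)) - (2 : ℝ) ^ (-(n : ℤ)) / 2)
      ((2 * (j : ℝ) + 1) / (2 * (n : ℝ)) + (2 : ℝ) ^ (-(n : ℤ)) / 2)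

lemma towerSeq_pos (k : ℕ) : 0 < towerSeq k := by
  cases k with
  | zero => norm_num [towerSeq]
  | succ j => exact pow_pos (by norm_num) _

lemma towerSeq_lt_succ (k : ℕ) : towerSeq k < towerSeq (k + 1) := by
  show towerSeq k < 2 ^ (towerSeq k + 1)
  calc towerSeq k < 2 ^ (towerSeq k) := Nat.lt_two_pow_self
    _ ≤ 2 ^ (towerSeq k + 1) := Nat.pow_le_pow_right (by norm_num) (Nat.le_succ _)

lemma towerSeq_mono : StrictMono towerSeq := strictMono_nat_of_lt_succ towerSeq_lt_succ

lemma towerSeq_spec (k : ℕ) : ∃ e, towerSeq k = 2 ^ e ∧ ∀ i, i < k → towerSeq i + 1 ≤ e := by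
  cases k with
  | zero => exact ⟨10, rfl, fun i hi => absurd hi (Nat.not_lt_zero i)⟩
  | succ j =>
    refine ⟨towerSeq j + 1, rfl, fun i hi => ?_⟩
    have := towerSeq_mono.monotone (Nat.lt_succ_iff.mp hi)
    omega

-- interval dichotomy
lemma grid_dich (n : ℕ) (hn : 0 < n) (p q : ℤ) (a : ℕ) (x : ℝ)
    (hx : x ∈ Ioo ((a : ℝ)/n) (((a : ℝ)+1)/n)) (hx2 : x ∈ Ioo ((p : ℝ)/n) ((q : ℝ)/n)) :
    Ioo ((a : ℝ)/n) (((a : ℝ)+1)/n) ⊆ Ioo ((p : ℝ)/n) ((q : ℝ)/n) := by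
  have hn' : (0:ℝ) < n := by exact_mod_cast hn
  have h1 : (p:ℝ)/n < ((a:ℝ)+1)/n := lt_trans hx2.1 hx.2
  have h2 : (a:ℝ)/n < (q:ℝ)/n := lt_trans hx.1 hx2.2
  have hp : (p:ℝ) < (a:ℝ)+1 := by
    have := (div_lt_div_iff_of_pos_right hn').mp h1; linarith
  have hq : (a:ℝ) < (q:ℝ) := by
    have := (div_lt_div_iff_of_pos_right hn').mp h2; linarith
  have hp' : p ≤ (a:ℤ) := by exact_mod_cast Int.lt_add_one_iff.mp (by exact_mod_cast hp)
  have hq' : (a:ℤ) + 1 ≤ q := Int.add_one_le_iff.mpr (by exact_mod_cast hq)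
  apply Ioo_subset_Ioo
  · gcongr
    exact_mod_cast hp'
  · gcongr
    exact_mod_cast hq'

-- endpoint rationality
lemma endpoint_rat (a e m j : ℕ) (hm : m = 2 ^ a) (hme : m + 1 ≤ e) :
    ∃ P Q : ℤ,
      (2*(j:ℝ)+1)/(2*(m:ℝ)) - (2:ℝ)^(-(m:ℤ))/2 = (P:ℝ)/2^e ∧
      (2*(j:ℝ)+1)/(2*(m:ℝ)) + (2:ℝ)^(-(m:ℤ))/2 = (Q:ℝ)/2^e := by
  have ham : a < m := hm ▸ Nat.lt_two_pow_self (n := a)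
  have hae : a + 1 ≤ e := by omega
  have hA : (2:ℝ)^(e-a-1) * (2 * 2^a) = 2^e := by
    have h : e - a - 1 + (a+1) = e := by omega
    calc (2:ℝ)^(e-a-1) * (2 * 2^a) = 2^(e-a-1) * 2^(a+1) := by ring
      _ = 2^(e-a-1+(a+1)) := (pow_add 2 _ _).symm
      _ = 2^e := by rw [h]
  have hB : (2:ℝ)^(e-m-1) * (2 * 2^m) = 2^e := by
    have h : e - m - 1 + (m+1) = e := by omega
    calc (2:ℝ)^(e-m-1) * (2 * 2^m) = 2^(e-m-1) * 2^(m+1) := by ring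
      _ = 2^(e-m-1+(m+1)) := (pow_add 2 _ _).symm
      _ = 2^e := by rw [h]
  have hz : (2:ℝ)^(-(m:ℤ)) = ((2:ℝ)^m)⁻¹ := by
    rw [zpow_neg, zpow_natCast]
  have e1 : (2*(j:ℝ)+1)/(2*(m:ℝ)) = ((2*(j:ℝ)+1) * 2^(e-a-1))/2^e := by
    rw [hm]; push_cast
    rw [div_eq_div_iff (by positivity) (by positivity)]
    linear_combination (-(2*(j:ℝ)+1)) * hA
  have e2 : (2:ℝ)^(-(m:ℤ))/2 = (2:ℝ)^(e-m-1)/2^e := by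
    rw [hz, inv_eq_one_div, div_div, div_eq_div_iff (by positivity) (by positivity)]
    linear_combination -hB
  refine ⟨(2*(j:ℤ)+1) * 2^(e-a-1) - 2^(e-m-1), (2*(j:ℤ)+1) * 2^(e-a-1) + 2^(e-m-1), ?_, ?_⟩
  · rw [e1, e2]; push_cast; ring
  · rw [e1, e2]; push_cast; ring

-- J ⊆ C
lemma J_subset_C (n j : ℕ) (hn : 0 < n) :
    Ioo ((2*(j:ℝ)+1)/(2*(n:ℝ)) - (2:ℝ)^(-(n:ℤ))/2) ((2*(j:ℝ)+1)/(2*(n:ℝ)) + (2:ℝ)^(-(n:ℤ))/2)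
      ⊆ Ioo ((j:ℝ)/n) (((j:ℝ)+1)/n) := by
  have hn' : (0:ℝ) < n := by exact_mod_cast hn
  have h2n : (n:ℝ) ≤ 2^n := by exact_mod_cast (Nat.lt_two_pow_self (n := n)).le
  have hz : (2:ℝ)^(-(n:ℤ)) = ((2:ℝ)^n)⁻¹ := by rw [zpow_neg, zpow_natCast]
  have key : (2:ℝ)^(-(n:ℤ))/2 ≤ 1/(2*n) := by
    rw [hz, inv_eq_one_div, div_div, div_le_div_iff₀ (by positivity) (by positivity)]
    nlinarith
  apply Ioo_subset_Ioo
  · have : (j:ℝ)/n = (2*(j:ℝ)+1)/(2*n) - 1/(2*n) := by field_simp; ring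
    rw [this]; linarith
  · have : ((j:ℝ)+1)/n = (2*(j:ℝ)+1)/(2*n) + 1/(2*n) := by field_simp; ring
    rw [this]; linarith

lemma C_disj (n : ℕ) (hn : 0 < n) {i j : ℕ} (h : i ≠ j) :
    Disjoint (Ioo ((i:ℝ)/n) (((i:ℝ)+1)/n)) (Ioo ((j:ℝ)/n) (((j:ℝ)+1)/n)) := by
  have hn' : (0:ℝ) < n := by exact_mod_cast hn
  have key : ∀ i j : ℕ, i < j →
      Disjoint (Ioo ((i:ℝ)/n) (((i:ℝ)+1)/n)) (Ioo ((j:ℝ)/n) (((j:ℝ)+1)/n)) := by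
    intro i j hij
    rw [Set.disjoint_left]
    rintro x ⟨_, h2⟩ ⟨h3, _⟩
    have hle : ((i:ℝ)+1)/n ≤ (j:ℝ)/n := by
      gcongr
      exact_mod_cast hij
    linarith
  rcases h.lt_or_gt with h' | h'
  · exact key _ _ h'
  · exact (key _ _ h').symm

lemma volume_towerV (n : ℕ) (hn : 0 < n) :
    volume (towerV n) = (n : ENNReal) * ENNReal.ofReal ((2:ℝ)^(-(n:ℤ))) := by
  have hJC : ∀ j : ℕ,
      Ioo ((2*(j:ℝ)+1)/(2*(n:ℝ)) - (2:ℝ)^(-(n:ℤ))/2) ((2*(j:ℝ)+1)/(2*(n:ℝ)) + (2:ℝ)^(-(n:ℤ))/2)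
        ⊆ Ioo ((j:ℝ)/n) (((j:ℝ)+1)/n) := fun j => J_subset_C n j hn
  rw [towerV, measure_biUnion_finset ?_ (fun j _ => measurableSet_Ioo)]
  · have hterm : ∀ j ∈ Finset.range n,
        volume (Ioo ((2*(j:ℝ)+1)/(2*(n:ℝ)) - (2:ℝ)^(-(n:ℤ))/2)
          ((2*(j:ℝ)+1)/(2*(n:ℝ)) + (2:ℝ)^(-(n:ℤ))/2)) = ENNReal.ofReal ((2:ℝ)^(-(n:ℤ))) := by
      intro j _
      rw [Real.volume_Ioo]
      congr 1
      ring
    rw [Finset.sum_congr rfl hterm, Finset.sum_const, Finset.card_range, nsmul_eq_mul]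
  · intro i _ j _ hij
    exact Set.disjoint_of_subset (hJC i) (hJC j) (C_disj n hn hij)
/-- with `X_k = [0,1] \ ⋃_{i<k} V_{n_i}` along the tower sequence,
`Leb(V_{n_k} ∩ X_k) = Leb(X_k) · Leb(V_{n_k})`. -/
theorem tower_independence (k : ℕ) :
    volume (towerV (towerSeq k) ∩ (Set.Icc (0 : ℝ) 1 \ ⋃ i ∈ Finset.range k, towerV (towerSeq i))) =
      volume (Set.Icc (0 : ℝ) 1 \ ⋃ i ∈ Finset.range k, towerV (towerSeq i)) *
        volume (towerV (towerSeq k)) := by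
  classical
  obtain ⟨e, he, hle⟩ := towerSeq_spec k
  set n := towerSeq k with hn_def
  have hn : 0 < n := towerSeq_pos k
  have hn' : (0:ℝ) < n := by exact_mod_cast hn
  have hnr : (n:ℝ) = 2 ^ e := by rw [he]; push_cast; ring
  set U : Set ℝ := ⋃ i ∈ Finset.range k, towerV (towerSeq i) with hU
  set C : ℕ → Set ℝ := fun a => Ioo ((a:ℝ)/n) (((a:ℝ)+1)/n) with hC
  set Jf : ℕ → Set ℝ := fun j =>
    Ioo ((2*(j:ℝ)+1)/(2*(n:ℝ)) - (2:ℝ)^(-(n:ℤ))/2)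
      ((2*(j:ℝ)+1)/(2*(n:ℝ)) + (2:ℝ)^(-(n:ℤ))/2) with hJf
  have hUmeas : MeasurableSet U := by
    apply MeasurableSet.biUnion (Finset.range k).countable_toSet
    intro i _
    exact MeasurableSet.biUnion (Finset.range (towerSeq i)).countable_toSet
      (fun j _ => measurableSet_Ioo)
  -- dichotomy
  have dich : ∀ a : ℕ, C a ⊆ U ∨ Disjoint (C a) U := by
    intro a
    by_cases h : Disjoint (C a) U
    · exact Or.inr h
    · left
      rw [Set.not_disjoint_iff] at h
      obtain ⟨x, hxC, hxU⟩ := h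
      rw [hU] at hxU
      simp only [towerV, mem_iUnion, exists_prop] at hxU
      obtain ⟨i, hi, j, hj, hxJ⟩ := hxU
      obtain ⟨ai, hai, _⟩ := towerSeq_spec i
      obtain ⟨P, Q, hP, hQ⟩ :=
        endpoint_rat ai e (towerSeq i) j hai (hle i (Finset.mem_range.mp hi))
      have hx2 : x ∈ Ioo ((P:ℝ)/n) ((Q:ℝ)/n) := by
        rw [hnr, ← hP, ← hQ]; exact hxJ
      have hsub := grid_dich n hn P Q a x hxC hx2
      refine hsub.trans ?_
      rw [hnr, ← hP, ← hQ]
      intro y hy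
      rw [hU]
      exact Set.mem_biUnion hi (Set.mem_biUnion hj hy)
  set S : Finset ℕ := (Finset.range n).filter (fun a => Disjoint (C a) U) with hS
  set G : Set ℝ := ⋃ a ∈ S, C a with hG
  -- G ⊆ X
  have hCIcc : ∀ a : ℕ, a < n → C a ⊆ Icc 0 1 := by
    intro a ha
    refine (Ioo_subset_Icc_self).trans (Icc_subset_Icc ?_ ?_)
    · positivity
    · rw [div_le_one hn']
      exact_mod_cast Nat.succ_le_of_lt ha
  have hGX : G ⊆ Icc 0 1 \ U := by
    intro x hx
    rw [hG] at hx
    simp only [mem_iUnion, exists_prop] at hx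
    obtain ⟨a, haS, hxa⟩ := hx
    rw [hS, Finset.mem_filter, Finset.mem_range] at haS
    exact ⟨hCIcc a haS.1 hxa, (Set.disjoint_left.mp haS.2 hxa)⟩
  -- X \ G is null
  have hnull : volume ((Icc 0 1 \ U) \ G) = 0 := by
    have hFfin : Set.Finite ((fun a : ℕ => (a:ℝ)/n) '' {a : ℕ | a ≤ n}) :=
      (Set.finite_le_nat n).image _
    refine measure_mono_null ?_ (hFfin.measure_zero volume)
    intro x hx
    by_contra hxF
    obtain ⟨⟨hx0, hx1⟩, hxU⟩ := hx.1
    have hxG := hx.2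
    have hxn0 : (0:ℝ) ≤ x * n := by positivity
    have hx1' : x < 1 := by
      rcases lt_or_eq_of_le hx1 with h | h
      · exact h
      · exfalso; apply hxF
        refine ⟨n, le_refl n, ?_⟩
        show (n:ℝ)/n = x
        rw [div_self hn'.ne', h]
    set a : ℕ := ⌊x * n⌋₊ with ha_def
    have hfl : (a:ℝ) ≤ x * n := Nat.floor_le hxn0
    have hfu : x * n < a + 1 := Nat.lt_floor_add_one _
    have han : a < n := by
      rw [ha_def, Nat.floor_lt hxn0]
      calc x * n < 1 * n := by gcongr
        _ = n := one_mul _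
    have hlt : (a:ℝ) < x * n := by
      rcases lt_or_eq_of_le hfl with h | h
      · exact h
      · exfalso; apply hxF
        refine ⟨a, le_of_lt han, ?_⟩
        show (a:ℝ)/n = x
        rw [div_eq_iff hn'.ne']
        exact h
    have hxC : x ∈ C a := ⟨(div_lt_iff₀ hn').mpr hlt, (lt_div_iff₀ hn').mpr hfu⟩
    rcases dich a with hsub | hdisj
    · exact hxU (hsub hxC)
    · apply hxG
      rw [hG]
      exact Set.mem_biUnion (Finset.mem_filter.mpr ⟨Finset.mem_range.mpr han, hdisj⟩) hxC
  have hae : (Icc 0 1 \ U : Set ℝ) =ᵐ[volume] G := by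
    rw [MeasureTheory.ae_eq_set]
    constructor
    · exact hnull
    · rw [Set.diff_eq_empty.mpr hGX]; exact measure_empty
  -- volume computations
  have hvolC : ∀ a : ℕ, volume (C a) = ENNReal.ofReal (1/(n:ℝ)) := by
    intro a
    rw [hC]
    simp only [Real.volume_Ioo]
    congr 1
    field_simp
    ring
  have hvG : volume G = (S.card : ENNReal) * ENNReal.ofReal (1/(n:ℝ)) := by
    rw [hG, measure_biUnion_finset ?_ (fun a _ => measurableSet_Ioo)]
    · rw [Finset.sum_congr rfl (fun a _ => hvolC a), Finset.sum_const, nsmul_eq_mul]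
    · intro i _ j _ hij
      exact C_disj n hn hij
  -- towerV n ∩ C a = Jf a for a < n
  have hVC : ∀ a : ℕ, a < n → towerV n ∩ C a = Jf a := by
    intro a ha
    apply Set.Subset.antisymm
    · rintro x ⟨hxV, hxC⟩
      simp only [towerV, mem_iUnion, exists_prop] at hxV
      obtain ⟨j, hj, hxJ⟩ := hxV
      have hxj : x ∈ C j := J_subset_C n j hn hxJ
      by_cases hja : j = a
      · rw [← hja]; exact hxJ
      · exact absurd hxC (Set.disjoint_left.mp (C_disj n hn hja) hxj)
    · intro x hx
      refine ⟨?_, J_subset_C n a hn hx⟩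
      simp only [towerV, mem_iUnion, exists_prop]
      exact ⟨a, Finset.mem_range.mpr ha, hx⟩
  have hvVG : volume (towerV n ∩ G) = (S.card : ENNReal) * ENNReal.ofReal ((2:ℝ)^(-(n:ℤ))) := by
    have : towerV n ∩ G = ⋃ a ∈ S, Jf a := by
      rw [hG, Set.inter_iUnion₂]
      apply Set.iUnion₂_congr
      intro a haS
      rw [hS, Finset.mem_filter, Finset.mem_range] at haS
      exact hVC a haS.1
    rw [this, measure_biUnion_finset ?_ (fun a _ => measurableSet_Ioo)]
    · have hterm : ∀ a ∈ S, volume (Jf a) = ENNReal.ofReal ((2:ℝ)^(-(n:ℤ))) := by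
        intro a _
        rw [hJf]
        simp only [Real.volume_Ioo]
        congr 1
        ring
      rw [Finset.sum_congr rfl hterm, Finset.sum_const, nsmul_eq_mul]
    · intro i _ j _ hij
      exact Set.disjoint_of_subset (J_subset_C n i hn) (J_subset_C n j hn) (C_disj n hn hij)
  have hX1 : volume (towerV n ∩ (Icc 0 1 \ U)) = volume (towerV n ∩ G) :=
    measure_congr (Filter.EventuallyEq.inter (Filter.EventuallyEq.refl _ _) hae)
  have hX2 : volume (Icc 0 1 \ U) = volume G := measure_congr hae
  rw [hX1, hX2, hvVG, hvG, volume_towerV n hn]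
  have hkey : ENNReal.ofReal (1/(n:ℝ)) * (n : ENNReal) = 1 := by
    rw [show ((n : ℕ) : ENNReal) = ENNReal.ofReal ((n:ℕ):ℝ) from (ENNReal.ofReal_natCast n).symm,
      ← ENNReal.ofReal_mul (by positivity)]
    rw [one_div, inv_mul_cancel₀ hn'.ne']
    exact ENNReal.ofReal_one
  calc (S.card : ENNReal) * ENNReal.ofReal ((2:ℝ)^(-(n:ℤ)))
      = (S.card : ENNReal) * (ENNReal.ofReal (1/(n:ℝ)) * (n : ENNReal))
        * ENNReal.ofReal ((2:ℝ)^(-(n:ℤ))) := by rw [hkey, mul_one]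
    _ = (S.card : ENNReal) * ENNReal.ofReal (1/(n:ℝ))
        * ((n : ENNReal) * ENNReal.ofReal ((2:ℝ)^(-(n:ℤ)))) := by ring
end
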